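/- Let C₁,…,C_N ∈ M_{m×n}(ℂ), let L ∈ M_{mn}(O_N) be the linear matrix germ L(u) = Σ_{λ=1}^N u_λ C_λ in coordinates u = (u₁,…,u_N) on ℂ^N, and for d ≥ 1 let F ∈ M_{mn}(O_N) be given by F(x) = L(x₁^d,…,x_N^d) = Σ_{λ=1}^N x_λ^d C_λ. Suppose there exists a natural number r such that the O_N-submodule of M_{mn}(O_N) generated by the matrices u_λ·C_λ (λ = 1,…,N, where C_λ = ∂L/∂u_λ) together with the matrices R_{lk}(L) (1 ≤ l,k ≤ m) and C_{pq}(L) (1 ≤ p,q ≤ n) contains 𝔪_N^r·M_{mn}(O_N). Then there exists a natural number s such that the G-tangent space of F satisfies TG(F) ⊇ 𝔪_N^s·M_{mn}(O_N). -/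

import Mathlib

open Filter Topology MvPolynomial

noncomputable section

/-- The ring `O_N` of germs at `0` of analytic functions on `ℂ^N`, as a subring of the
ring of germs at `0` of all functions `ℂ^N → ℂ`. -/
def Ogerm (N : ℕ) : Subring (Filter.Germ (𝓝 (0 : Fin N → ℂ)) ℂ) where
  carrier := {φ | ∃ f : (Fin N → ℂ) → ℂ, AnalyticAt ℂ f 0 ∧ φ = Filter.Germ.ofFun f}
  mul_mem' := by
    rintro _ _ ⟨f, hf, rfl⟩ ⟨g, hg, rfl⟩
    exact ⟨f * g, hf.mul hg, rfl⟩
  one_mem' := ⟨fun _ => 1, analyticAt_const, rfl⟩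
  add_mem' := by
    rintro _ _ ⟨f, hf, rfl⟩ ⟨g, hg, rfl⟩
    exact ⟨f + g, hf.add hg, rfl⟩
  zero_mem' := ⟨fun _ => 0, analyticAt_const, rfl⟩
  neg_mem' := by
    rintro _ ⟨f, hf, rfl⟩
    exact ⟨-f, hf.neg, rfl⟩

/-- Polynomials are analytic. -/
lemma analyticAt_eval {N : ℕ} (p : MvPolynomial (Fin N) ℂ) (x : Fin N → ℂ) :
    AnalyticAt ℂ (fun y => MvPolynomial.eval y p) x := by
  induction p using MvPolynomial.induction_on with
  | C a => simpa using analyticAt_const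
  | add p q hp hq => simp only [map_add]; exact hp.add hq
  | mul_X p i hp =>
      simp only [map_mul, eval_X]; exact
        hp.mul ((ContinuousLinearMap.proj (R := ℂ) (φ := fun _ : Fin N => ℂ) i).analyticAt x)

/-- The germ at `0` of (the evaluation of) a polynomial, as an element of `O_N`. -/
def polyGerm {N : ℕ} (p : MvPolynomial (Fin N) ℂ) : Ogerm N :=
  ⟨Filter.Germ.ofFun (fun x => MvPolynomial.eval x p), ⟨_, analyticAt_eval p 0, rfl⟩⟩

/-- The maximal ideal `𝔪_N` of `O_N`: germs vanishing at the origin. -/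
def mIdeal (N : ℕ) : Ideal (Ogerm N) :=
  RingHom.ker ((Filter.Germ.valueRingHom (x := (0 : Fin N → ℂ))).comp (Ogerm N).subtype)

/-- The germ in `M_{mn}(O_N)` of a matrix of polynomials. -/
def matGerm {N m n : ℕ} (P : Fin m → Fin n → MvPolynomial (Fin N) ℂ) :
    Matrix (Fin m) (Fin n) (Ogerm N) :=
  Matrix.of fun i j => polyGerm (P i j)

/-- The generators `R_{lk}(P)` (matrix whose `l`-th row is the `k`-th row of `P`, other rows
zero) and `C_{pq}(P)` (matrix whose `p`-th column is the `q`-th column of `P`, other columns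
zero) of the row/column part of the tangent space, for a polynomial matrix `P`. -/
def rowColGenerators {N m n : ℕ} (P : Fin m → Fin n → MvPolynomial (Fin N) ℂ) :
    Set (Matrix (Fin m) (Fin n) (Ogerm N)) :=
  (Set.range fun lk : Fin m × Fin m =>
    (Matrix.of fun i j => if i = lk.1 then polyGerm (P lk.2 j) else 0 :
      Matrix (Fin m) (Fin n) (Ogerm N))) ∪
  (Set.range fun pq : Fin n × Fin n =>
    (Matrix.of fun i j => if j = pq.1 then polyGerm (P i pq.2) else 0 :
      Matrix (Fin m) (Fin n) (Ogerm N)))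

/-- `J(P)`: the `O_N`-submodule generated by the partial derivatives `∂P/∂x_λ` of a
polynomial matrix `P`. -/
def jacobianModule {N m n : ℕ} (P : Fin m → Fin n → MvPolynomial (Fin N) ℂ) :
    Submodule (Ogerm N) (Matrix (Fin m) (Fin n) (Ogerm N)) :=
  Submodule.span (Ogerm N)
    (Set.range fun lam : Fin N => matGerm fun i j => pderiv lam (P i j))

/-- The `G`-tangent space `TG(P) = 𝔪_N·J(P) + O_N·{R_{lk}(P), C_{pq}(P)}` of a polynomial
matrix `P`. -/
def GTangent {N m n : ℕ} (P : Fin m → Fin n → MvPolynomial (Fin N) ℂ) :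
    Submodule (Ogerm N) (Matrix (Fin m) (Fin n) (Ogerm N)) :=
  mIdeal N • jacobianModule P ⊔ Submodule.span (Ogerm N) (rowColGenerators P)


lemma analytic_factor {N : ℕ} {f : (Fin N → ℂ) → ℂ} (hf : AnalyticAt ℂ f 0) (h0 : f 0 = 0) :
    ∃ g : Fin N → ((Fin N → ℂ) → ℂ), (∀ i, AnalyticAt ℂ (g i) 0) ∧
      ∀ᶠ x in 𝓝 (0 : Fin N → ℂ), f x = ∑ i, x i * g i x := by
  obtain ⟨p, r, hp⟩ := hf
  -- curried series
  set q : Fin N → FormalMultilinearSeries ℂ (Fin N → ℂ) ℂ :=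
    fun i n => (p (n + 1)).curryLeft (Pi.single i 1) with hq
  have hqnorm : ∀ i n, ‖q i n‖ ≤ ‖p (n + 1)‖ := by
    intro i n
    apply ContinuousMultilinearMap.opNorm_le_bound (norm_nonneg _)
    intro m
    have : q i n m = (p (n + 1)) (Fin.cons (Pi.single i 1) m) := rfl
    rw [this]
    calc ‖(p (n + 1)) (Fin.cons (Pi.single i 1) m)‖
        ≤ ‖p (n + 1)‖ * ∏ j, ‖(Fin.cons (Pi.single i 1) m : Fin (n+1) → (Fin N → ℂ)) j‖ :=
          ContinuousMultilinearMap.le_opNorm _ _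
      _ ≤ ‖p (n + 1)‖ * ∏ j, ‖m j‖ := by
          rw [Fin.prod_univ_succ]
          simp only [Fin.cons_zero, Fin.cons_succ, Pi.norm_single, norm_one, one_mul]
          exact le_rfl
  -- choose a positive real radius inside r and p.radius
  obtain ⟨r', hr'0e, hr'r⟩ := ENNReal.lt_iff_exists_nnreal_btwn.1 hp.r_pos
  have hr'0 : 0 < r' := by exact_mod_cast hr'0e
  have hrad : (r' : ENNReal) < p.radius := lt_of_lt_of_le hr'r hp.r_le
  obtain ⟨Cb, hCb0, hCb⟩ := p.norm_mul_pow_le_of_lt_radius hrad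
  have hqrad : ∀ i, (r' : ENNReal) ≤ (q i).radius := by
    intro i
    apply (q i).le_radius_of_bound (Cb / r')
    intro n
    have h1 : ‖q i n‖ * (r' : ℝ) ^ n ≤ ‖p (n+1)‖ * (r' : ℝ) ^ n :=
      mul_le_mul_of_nonneg_right (hqnorm i n) (by positivity)
    have h2 : ‖p (n+1)‖ * (r' : ℝ) ^ n = (‖p (n+1)‖ * (r' : ℝ) ^ (n+1)) / r' := by
      field_simp [pow_succ]
      ring
    calc ‖q i n‖ * (r' : ℝ) ^ n ≤ ‖p (n+1)‖ * (r' : ℝ) ^ n := h1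
      _ = (‖p (n+1)‖ * (r' : ℝ) ^ (n+1)) / r' := h2
      _ ≤ Cb / r' := by
          have hr'' : (0:ℝ) < r' := by exact_mod_cast hr'0
          gcongr
          exact hCb (n+1)
  set g : Fin N → ((Fin N → ℂ) → ℂ) := fun i => (q i).sum with hg
  have hganal : ∀ i, AnalyticAt ℂ (g i) 0 := by
    intro i
    have : 0 < (q i).radius := lt_of_lt_of_le (by exact_mod_cast hr'0e) (hqrad i)
    exact ((q i).hasFPowerSeriesOnBall this).analyticAt
  refine ⟨g, hganal, ?_⟩
  have hball : EMetric.ball (0 : Fin N → ℂ) (r' : ENNReal) ∈ 𝓝 (0 : Fin N → ℂ) :=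
    EMetric.ball_mem_nhds _ (by exact_mod_cast hr'0e)
  filter_upwards [hball] with x hx
  -- two HasSum statements
  have hxr : x ∈ EMetric.ball (0 : Fin N → ℂ) r := EMetric.ball_subset_ball hr'r.le hx
  have hsum1 : HasSum (fun n => p n fun _ => x) (f x) := by
    have := hp.hasSum hxr
    simpa using this
  have hp0 : (p 0 fun _ => x) = 0 := by
    have := hp.coeff_zero fun _ => x
    rw [this, h0]
  have hsum1' : HasSum (fun n => p (n + 1) fun _ => x) (f x) := by
    have h := (hasSum_nat_add_iff' 1).2 hsum1
    simpa [hp0] using h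
  have hxqi : ∀ i, x ∈ EMetric.ball (0 : Fin N → ℂ) (q i).radius := fun i =>
    EMetric.ball_subset_ball (hqrad i) hx
  have hsum2 : ∀ i, HasSum (fun n => q i n fun _ => x) (g i x) := fun i =>
    (q i).hasSum (hxqi i)
  -- expand first slot
  have hexp : ∀ n, (p (n + 1) fun _ => x) = ∑ i, x i * (q i n fun _ => x) := by
    intro n
    have hcons : (fun _ : Fin (n+1) => x) = Fin.cons x (fun _ : Fin n => x) := by
      funext j
      refine Fin.cases ?_ ?_ j <;> simp
    rw [hcons, ← ContinuousMultilinearMap.curryLeft_apply]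
    have hxdec : x = ∑ i, x i • (Pi.single i 1 : Fin N → ℂ) := by
      funext a
      simp [Pi.single_apply, Finset.sum_apply]
    have h1 : (p (n+1)).curryLeft x = ∑ i, x i • (p (n+1)).curryLeft (Pi.single i 1) := by
      conv_lhs => rw [hxdec]
      rw [map_sum]
      simp only [map_smul]
    rw [h1, ContinuousMultilinearMap.sum_apply]
    simp [smul_eq_mul, hq, ContinuousMultilinearMap.curryLeft_apply]
  have hsum3 : HasSum (fun n => ∑ i, x i * (q i n fun _ => x)) (∑ i, x i * g i x) := by
    apply hasSum_sum
    intro i _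
    simpa [smul_eq_mul] using (hsum2 i).const_smul (x i)
  have hsum1'' : HasSum (fun n => ∑ i, x i * (q i n fun _ => x)) (f x) := by
    simpa only [hexp] using hsum1'
  exact hsum1''.unique hsum3


section Infra

open Filter MvPolynomial

variable {N : ℕ}

lemma ofFun_mul {α : Type*} {l : Filter α} (f g : α → ℂ) :
    (Filter.Germ.ofFun (f * g) : Filter.Germ l ℂ) = Filter.Germ.ofFun f * Filter.Germ.ofFun g :=
  rfl

lemma ofFun_add {α : Type*} {l : Filter α} (f g : α → ℂ) :
    (Filter.Germ.ofFun (f + g) : Filter.Germ l ℂ) = Filter.Germ.ofFun f + Filter.Germ.ofFun g :=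
  rfl

lemma ideal_span_range_eq_iSup {R : Type*} [CommRing R] {ι : Sort*} (v : ι → R) :
    Ideal.span (Set.range v) = ⨆ i, Ideal.span {v i} :=
  Submodule.span_range_eq_iSup

/-- `polyGerm` as a ring homomorphism. -/
def polyGermHom (N : ℕ) : MvPolynomial (Fin N) ℂ →+* Ogerm N where
  toFun := polyGerm
  map_one' := Subtype.ext <| congrArg Filter.Germ.ofFun (funext fun x => by simp)
  map_mul' p q := Subtype.ext <| by
    show Filter.Germ.ofFun _ = Filter.Germ.ofFun _ * Filter.Germ.ofFun _
    rw [← ofFun_mul]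
    exact congrArg Filter.Germ.ofFun (funext fun x => by simp)
  map_zero' := Subtype.ext <| congrArg Filter.Germ.ofFun (funext fun x => by simp)
  map_add' p q := Subtype.ext <| by
    show Filter.Germ.ofFun _ = Filter.Germ.ofFun _ + Filter.Germ.ofFun _
    rw [← ofFun_add]
    exact congrArg Filter.Germ.ofFun (funext fun x => by simp)

lemma polyGermHom_apply (p : MvPolynomial (Fin N) ℂ) : polyGermHom N p = polyGerm p := rfl

lemma mem_mIdeal_iff {a : Ogerm N} : a ∈ mIdeal N ↔ Filter.Germ.value (a : Filter.Germ (𝓝 (0 : Fin N → ℂ)) ℂ) = 0 := by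
  rw [mIdeal, RingHom.mem_ker]
  rfl

lemma value_ofFun (f : (Fin N → ℂ) → ℂ) :
    Filter.Germ.value (Filter.Germ.ofFun f : Filter.Germ (𝓝 (0 : Fin N → ℂ)) ℂ) = f 0 := rfl

lemma polyGerm_mem_mIdeal {p : MvPolynomial (Fin N) ℂ} (hp : eval (0 : Fin N → ℂ) p = 0) :
    polyGerm p ∈ mIdeal N := by
  rw [mem_mIdeal_iff]
  show Filter.Germ.value (Filter.Germ.ofFun fun x => eval x p) = 0
  rw [value_ofFun]
  exact hp

lemma X_mem_mIdeal (i : Fin N) : polyGerm (X i : MvPolynomial (Fin N) ℂ) ∈ mIdeal N :=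
  polyGerm_mem_mIdeal (by simp)

/-- The maximal ideal is contained in the ideal generated by the coordinate germs. -/
lemma mIdeal_le_span :
    mIdeal N ≤ Ideal.span (Set.range fun i => polyGerm (X i : MvPolynomial (Fin N) ℂ)) := by
  intro a ha
  obtain ⟨f, hf, hval⟩ := a.2
  have hf0 : f 0 = 0 := by
    have h := (mem_mIdeal_iff).1 ha
    rw [hval, value_ofFun] at h
    exact h
  obtain ⟨g, hg, heq⟩ := analytic_factor hf hf0
  have key : a = ∑ i, polyGerm (X i : MvPolynomial (Fin N) ℂ) *
      (⟨Filter.Germ.ofFun (g i), g i, hg i, rfl⟩ : Ogerm N) := by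
    apply Subtype.ext
    have hsum : ((∑ i, polyGerm (X i : MvPolynomial (Fin N) ℂ) *
        (⟨Filter.Germ.ofFun (g i), g i, hg i, rfl⟩ : Ogerm N) : Ogerm N) :
          Filter.Germ (𝓝 (0 : Fin N → ℂ)) ℂ)
        = Filter.Germ.ofFun (fun x => ∑ i, x i * g i x) := by
      rw [AddSubmonoidClass.coe_finset_sum]
      have : ∀ i : Fin N, ((polyGerm (X i : MvPolynomial (Fin N) ℂ) *
          (⟨Filter.Germ.ofFun (g i), g i, hg i, rfl⟩ : Ogerm N) : Ogerm N) : Filter.Germ (𝓝 (0 : Fin N → ℂ)) ℂ)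
          = Filter.Germ.ofFun (fun x => x i * g i x) := by
        intro i
        show Filter.Germ.ofFun (fun x => eval x (X i)) * Filter.Germ.ofFun (g i) = _
        rw [← ofFun_mul]
        exact congrArg Filter.Germ.ofFun (funext fun x => by simp)
      rw [Finset.sum_congr rfl fun i _ => this i]
      have h4 : ∀ i : Fin N, (Filter.Germ.ofFun (fun x => x i * g i x) : Filter.Germ (𝓝 (0 : Fin N → ℂ)) ℂ)
          = Filter.Germ.coeRingHom _ (fun x => x i * g i x) := fun i => rfl
      rw [Finset.sum_congr rfl fun i _ => h4 i, ← map_sum]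
      apply congrArg Filter.Germ.ofFun
      funext x
      simp
    rw [hsum, hval]
    exact Filter.Germ.coe_eq.mpr heq
  rw [key]
  exact Ideal.sum_mem _ fun i _ => Ideal.mul_mem_right _ _ (Ideal.subset_span ⟨i, rfl⟩)

/-- Pigeonhole for powers of a finite sup of ideals. -/
lemma iSup_pow_le {R : Type*} [CommRing R] {ι : Type*} [DecidableEq ι] (s : Finset ι)
    (J : ι → Ideal R) (k : ℕ) :
    (⨆ i ∈ s, J i) ^ (s.card * k + 1) ≤ ⨆ i ∈ s, J i ^ k := by
  induction s using Finset.induction_on with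
  | empty => simp
  | @insert a t ha ih =>
      rw [Finset.iSup_insert, Finset.card_insert_of_notMem ha]
      have hexp : (t.card + 1) * k + 1 = k + (t.card * k + 1) := by ring
      rw [hexp]
      calc (J a ⊔ ⨆ i ∈ t, J i) ^ (k + (t.card * k + 1))
          ≤ J a ^ k ⊔ (⨆ i ∈ t, J i) ^ (t.card * k + 1) := Ideal.sup_pow_add_le_pow_sup_pow
        _ ≤ J a ^ k ⊔ ⨆ i ∈ t, J i ^ k := sup_le_sup le_rfl ih
        _ = ⨆ i ∈ insert a t, J i ^ k := (Finset.iSup_insert a t fun i => J i ^ k).symm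

lemma mIdeal_pow_le (k : ℕ) :
    (mIdeal N) ^ (N * k + 1) ≤
      Ideal.span (Set.range fun i => polyGerm (X i : MvPolynomial (Fin N) ℂ) ^ k) := by
  have h1 := Ideal.pow_right_mono (mIdeal_le_span (N := N)) (N * k + 1)
  refine h1.trans ?_
  rw [ideal_span_range_eq_iSup, ideal_span_range_eq_iSup]
  have h2 : (⨆ i, Ideal.span {polyGerm (X i : MvPolynomial (Fin N) ℂ)}) ^ (N * k + 1)
      ≤ ⨆ i, Ideal.span {polyGerm (X i : MvPolynomial (Fin N) ℂ)} ^ k := by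
    have h3 := iSup_pow_le (Finset.univ : Finset (Fin N))
      (fun i => Ideal.span {polyGerm (X i : MvPolynomial (Fin N) ℂ)}) k
    simpa [Finset.card_univ] using h3
  exact h2.trans (iSup_mono fun i => le_of_eq (Ideal.span_singleton_pow _ _))

end Infra

section Subst

open Filter MvPolynomial

variable {N : ℕ}

/-- The power substitution map `x ↦ (x₁^d, …, x_N^d)`. -/
def powMap (N d : ℕ) : (Fin N → ℂ) → (Fin N → ℂ) := fun x i => (x i) ^ d

lemma powMap_zero (N : ℕ) {d : ℕ} (hd : 1 ≤ d) : powMap N d 0 = 0 := by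
  funext i
  simp [powMap, zero_pow (by omega : d ≠ 0)]

lemma powMap_tendsto (N : ℕ) {d : ℕ} (hd : 1 ≤ d) :
    Filter.Tendsto (powMap N d) (𝓝 (0 : Fin N → ℂ)) (𝓝 (0 : Fin N → ℂ)) := by
  have hc : Continuous (powMap N d) := continuous_pi fun i => (continuous_apply i).pow d
  have h := hc.tendsto 0
  rwa [powMap_zero N hd] at h

lemma powMap_analytic (N d : ℕ) : AnalyticAt ℂ (powMap N d) 0 :=
  AnalyticAt.pi fun i => ((ContinuousLinearMap.proj (R := ℂ)
    (φ := fun _ : Fin N => ℂ) i).analyticAt 0).pow d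

lemma compTendsto_mul {α β : Type*} {l : Filter α} {lc : Filter β} (g : β → α)
    (hg : Filter.Tendsto g lc l) (φ ψ : Filter.Germ l ℂ) :
    (φ * ψ).compTendsto g hg = φ.compTendsto g hg * ψ.compTendsto g hg := by
  induction φ using Filter.Germ.inductionOn with | _ f =>
  induction ψ using Filter.Germ.inductionOn with | _ f' =>
  rfl

lemma compTendsto_add {α β : Type*} {l : Filter α} {lc : Filter β} (g : β → α)
    (hg : Filter.Tendsto g lc l) (φ ψ : Filter.Germ l ℂ) :
    (φ + ψ).compTendsto g hg = φ.compTendsto g hg + ψ.compTendsto g hg := by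
  induction φ using Filter.Germ.inductionOn with | _ f =>
  induction ψ using Filter.Germ.inductionOn with | _ f' =>
  rfl

/-- Substitution `x ↦ (x₁^d,…,x_N^d)` as a ring endomorphism of `O_N`. -/
def subst (N : ℕ) (d : ℕ) (hd : 1 ≤ d) : Ogerm N →+* Ogerm N where
  toFun a := ⟨a.1.compTendsto (powMap N d) (powMap_tendsto N hd), by
    obtain ⟨f, hf, hval⟩ := a.2
    refine ⟨f ∘ powMap N d, ?_, ?_⟩
    · have hfa : AnalyticAt ℂ f (powMap N d 0) := by rwa [powMap_zero N hd]
      exact hfa.comp (powMap_analytic N d)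
    · rw [hval]
      exact (Filter.Germ.coe_compTendsto f (powMap_tendsto N hd)).symm⟩
  map_one' := Subtype.ext rfl
  map_mul' a b := Subtype.ext (compTendsto_mul (powMap N d) (powMap_tendsto N hd) a.1 b.1)
  map_zero' := Subtype.ext rfl
  map_add' a b := Subtype.ext (compTendsto_add (powMap N d) (powMap_tendsto N hd) a.1 b.1)

lemma subst_polyGerm {d : ℕ} (hd : 1 ≤ d) (q : MvPolynomial (Fin N) ℂ) :
    subst N d hd (polyGerm q) = polyGerm (aeval (fun i => (X i : MvPolynomial (Fin N) ℂ) ^ d) q) := by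
  apply Subtype.ext
  show (Filter.Germ.ofFun fun x => eval x q : Filter.Germ _ ℂ).compTendsto
      (powMap N d) (powMap_tendsto N hd) = Filter.Germ.ofFun fun x => eval x (aeval _ q)
  rw [Filter.Germ.coe_compTendsto]
  apply congrArg Filter.Germ.ofFun
  funext x
  show eval (powMap N d x) q = _
  induction q using MvPolynomial.induction_on with
  | C a => simp
  | add p q hp hq => simp [map_add, hp, hq]
  | mul_X p i hp => simp [map_mul, hp, powMap]

end Subst


section MainHelpers

open Filter MvPolynomial

variable {N m n : ℕ}

lemma polyGerm_mul' (p q : MvPolynomial (Fin N) ℂ) :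
    polyGerm (p * q) = polyGerm p * polyGerm q := map_mul (polyGermHom N) p q

lemma polyGerm_pow' (p : MvPolynomial (Fin N) ℂ) (k : ℕ) :
    polyGerm (p ^ k) = polyGerm p ^ k := map_pow (polyGermHom N) p k

lemma map_subst_smul {d : ℕ} (hd : 1 ≤ d) (c : Ogerm N) (M : Matrix (Fin m) (Fin n) (Ogerm N)) :
    (c • M).map (subst N d hd) = subst N d hd c • M.map (subst N d hd) := by
  ext i j
  simp [Matrix.map_apply, Matrix.smul_apply, smul_eq_mul, map_mul]

lemma map_subst_span {d : ℕ} (hd : 1 ≤ d) (S : Set (Matrix (Fin m) (Fin n) (Ogerm N)))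
    {v : Matrix (Fin m) (Fin n) (Ogerm N)} (hv : v ∈ Submodule.span (Ogerm N) S) :
    v.map (subst N d hd) ∈
      Submodule.span (Ogerm N) ((fun M => M.map (subst N d hd)) '' S) := by
  induction hv using Submodule.span_induction with
  | mem x h => exact Submodule.subset_span ⟨x, h, rfl⟩
  | zero =>
      rw [show (0 : Matrix (Fin m) (Fin n) (Ogerm N)).map (subst N d hd) = 0 by
        ext i j; simp [Matrix.map_apply]]
      exact Submodule.zero_mem _
  | add x y hx hy ihx ihy =>
      rw [show (x + y).map (subst N d hd) = x.map (subst N d hd) + y.map (subst N d hd) by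
        ext i j; simp [Matrix.map_apply, map_add]]
      exact Submodule.add_mem _ ihx ihy
  | smul a x hx ih =>
      rw [map_subst_smul hd a x]
      exact Submodule.smul_mem _ _ ih

lemma map_subst_matGerm {d : ℕ} (hd : 1 ≤ d) (P : Fin m → Fin n → MvPolynomial (Fin N) ℂ) :
    (matGerm P).map (subst N d hd)
      = matGerm fun i j => aeval (fun i => (X i : MvPolynomial (Fin N) ℂ) ^ d) (P i j) := by
  ext i j
  rw [Matrix.map_apply]
  exact congrArg Subtype.val (subst_polyGerm hd (P i j))

lemma pderiv_key {d : ℕ} (hd : 1 ≤ d) (a : Fin N → ℂ) (lam : Fin N) :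
    (MvPolynomial.C ((d : ℂ)⁻¹) * X lam) *
        pderiv lam (∑ mu, MvPolynomial.C (a mu) * (X mu : MvPolynomial (Fin N) ℂ) ^ d)
      = X lam ^ d * MvPolynomial.C (a lam) := by
  classical
  have hder : pderiv lam (∑ mu, MvPolynomial.C (a mu) * (X mu : MvPolynomial (Fin N) ℂ) ^ d)
      = MvPolynomial.C (a lam) * (((d : ℕ) : MvPolynomial (Fin N) ℂ) * X lam ^ (d - 1)) := by
    rw [map_sum]
    rw [Finset.sum_eq_single lam]
    · rw [pderiv_C_mul, pderiv_pow, pderiv_X_self]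
      ring
    · intro mu _ hmu
      rw [pderiv_C_mul, pderiv_pow, pderiv_X, Pi.single_eq_of_ne hmu]
      simp
    · simp
  rw [hder]
  obtain ⟨e, rfl⟩ : ∃ e, d = e + 1 := ⟨d - 1, by omega⟩
  have hd0 : (((e + 1 : ℕ) : ℂ)) ≠ 0 := by exact_mod_cast Nat.succ_ne_zero e
  have hnat : (((e + 1 : ℕ) : ℕ) : MvPolynomial (Fin N) ℂ)
      = MvPolynomial.C (((e + 1 : ℕ) : ℂ)) := by
    simp
  rw [hnat]
  have hC : MvPolynomial.C ((((e + 1 : ℕ) : ℂ))⁻¹) * MvPolynomial.C (((e + 1 : ℕ) : ℂ))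
      = (1 : MvPolynomial (Fin N) ℂ) := by
    rw [← MvPolynomial.C_mul, inv_mul_cancel₀ hd0, MvPolynomial.C_1]
  calc (MvPolynomial.C ((((e + 1 : ℕ) : ℂ))⁻¹) * X lam) *
        (MvPolynomial.C (a lam) * (MvPolynomial.C (((e + 1 : ℕ) : ℂ)) * X lam ^ ((e + 1) - 1)))
      = (MvPolynomial.C ((((e + 1 : ℕ) : ℂ))⁻¹) * MvPolynomial.C (((e + 1 : ℕ) : ℂ))) *
          (MvPolynomial.C (a lam) * (X lam * X lam ^ e)) := by
        simp only [Nat.add_sub_cancel]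
        ring
    _ = X lam ^ (e + 1) * MvPolynomial.C (a lam) := by
        rw [hC, one_mul, ← pow_succ']
        ring

end MainHelpers

set_option maxHeartbeats 1000000 in
/-- Let `L(u) = Σ_λ u_λ C_λ` be a linear matrix germ and `F(x) = Σ_λ x_λ^d C_λ`.  If for
some `r` the `O_N`-submodule generated by the matrices `u_λ·C_λ = u_λ·∂L/∂u_λ` together with
`R_{lk}(L)` and `C_{pq}(L)` contains `𝔪_N^r·M_{mn}(O_N)`, then there is `s` with
`TG(F) ⊇ 𝔪_N^s·M_{mn}(O_N)`. -/
theorem power_substitution_preserves_condition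
    {N m n : ℕ} (hm : 0 < m) (hn : 0 < n) (hN : 0 < N)
    (C : Fin N → Matrix (Fin m) (Fin n) ℂ) (d : ℕ) (hd : 1 ≤ d) (r : ℕ)
    (hL : (mIdeal N) ^ r • (⊤ : Submodule (Ogerm N) (Matrix (Fin m) (Fin n) (Ogerm N))) ≤
      Submodule.span (Ogerm N)
        ((Set.range fun lam : Fin N =>
            matGerm fun i j => X lam * MvPolynomial.C (C lam i j)) ∪
          rowColGenerators fun i j => ∑ lam : Fin N, MvPolynomial.C (C lam i j) * X lam)) :
    ∃ s : ℕ,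
      (mIdeal N) ^ s • (⊤ : Submodule (Ogerm N) (Matrix (Fin m) (Fin n) (Ogerm N))) ≤
        GTangent fun i j => ∑ lam : Fin N, MvPolynomial.C (C lam i j) * X lam ^ d := by
  classical
  refine ⟨N * (r * d) + 1, ?_⟩
  -- the image of the generating set under substitution lands in the tangent space
  have himg : (fun M => M.map (subst N d hd)) ''
      ((Set.range fun lam : Fin N =>
          matGerm fun i j => X lam * MvPolynomial.C (C lam i j)) ∪
        rowColGenerators fun i j => ∑ lam : Fin N, MvPolynomial.C (C lam i j) * X lam)
      ⊆ ((GTangent fun i j => ∑ lam : Fin N, MvPolynomial.C (C lam i j) * X lam ^ d :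
          Submodule (Ogerm N) (Matrix (Fin m) (Fin n) (Ogerm N))) :
            Set (Matrix (Fin m) (Fin n) (Ogerm N))) := by
    rintro _ ⟨w, hw, rfl⟩
    rcases hw with ⟨lam, rfl⟩ | hw
    · -- Jacobian generators
      have heq : (matGerm fun i j => X lam * MvPolynomial.C (C lam i j)).map (subst N d hd)
          = (polyGerm (MvPolynomial.C ((d : ℂ)⁻¹) * X lam)) •
              matGerm (fun i j =>
                pderiv lam (∑ mu : Fin N, MvPolynomial.C (C mu i j) * X mu ^ d)) := by
        rw [map_subst_matGerm hd]
        ext i j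
        have hpoly : (aeval fun i => (X i : MvPolynomial (Fin N) ℂ) ^ d)
            (X lam * MvPolynomial.C (C lam i j))
            = (MvPolynomial.C ((d : ℂ)⁻¹) * X lam) *
                pderiv lam (∑ mu : Fin N, MvPolynomial.C (C mu i j) * X mu ^ d) := by
          rw [pderiv_key hd (fun mu => C mu i j) lam]
          simp [MvPolynomial.algebraMap_eq, mul_comm]
        have hO : polyGerm ((aeval fun i => (X i : MvPolynomial (Fin N) ℂ) ^ d)
            (X lam * MvPolynomial.C (C lam i j)))
            = polyGerm (MvPolynomial.C ((d : ℂ)⁻¹) * X lam) *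
                polyGerm (pderiv lam (∑ mu : Fin N, MvPolynomial.C (C mu i j) * X mu ^ d)) := by
          rw [← polyGerm_mul']
          exact congrArg polyGerm hpoly
        exact congrArg Subtype.val hO
      dsimp only
      rw [heq]
      refine SetLike.mem_coe.mpr (Submodule.mem_sup_left (Submodule.smul_mem_smul ?_ ?_))
      · exact polyGerm_mem_mIdeal (by simp)
      · exact Submodule.subset_span ⟨lam, rfl⟩
    · -- row and column generators
      rcases hw with ⟨lk, rfl⟩ | ⟨pq, rfl⟩
      · have heq : (Matrix.of fun i j => if i = lk.1 then
            polyGerm ((fun i j => ∑ lam : Fin N, MvPolynomial.C (C lam i j) * X lam) lk.2 j)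
              else 0 : Matrix (Fin m) (Fin n) (Ogerm N)).map (subst N d hd)
            = Matrix.of fun i j => if i = lk.1 then
                polyGerm ((fun i j => ∑ lam : Fin N, MvPolynomial.C (C lam i j) * X lam ^ d) lk.2 j)
                  else 0 := by
          ext i j
          rw [Matrix.map_apply]
          have hO : subst N d hd (if i = lk.1 then
              polyGerm (∑ lam : Fin N, MvPolynomial.C (C lam lk.2 j) * X lam) else 0)
              = (if i = lk.1 then
                  polyGerm (∑ lam : Fin N, MvPolynomial.C (C lam lk.2 j) * X lam ^ d) else 0) := by
            rw [apply_ite (subst N d hd), map_zero, subst_polyGerm hd]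
            refine congrArg (fun z => if i = lk.1 then z else 0) (congrArg polyGerm ?_)
            simp [MvPolynomial.algebraMap_eq]
          exact congrArg Subtype.val hO
        dsimp only
        rw [heq]
        exact SetLike.mem_coe.mpr (Submodule.mem_sup_right
          (Submodule.subset_span (Or.inl ⟨lk, rfl⟩)))
      · have heq : (Matrix.of fun i j => if j = pq.1 then
            polyGerm ((fun i j => ∑ lam : Fin N, MvPolynomial.C (C lam i j) * X lam) i pq.2)
              else 0 : Matrix (Fin m) (Fin n) (Ogerm N)).map (subst N d hd)
            = Matrix.of fun i j => if j = pq.1 then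
                polyGerm ((fun i j => ∑ lam : Fin N, MvPolynomial.C (C lam i j) * X lam ^ d) i pq.2)
                  else 0 := by
          ext i j
          rw [Matrix.map_apply]
          have hO : subst N d hd (if j = pq.1 then
              polyGerm (∑ lam : Fin N, MvPolynomial.C (C lam i pq.2) * X lam) else 0)
              = (if j = pq.1 then
                  polyGerm (∑ lam : Fin N, MvPolynomial.C (C lam i pq.2) * X lam ^ d) else 0) := by
            rw [apply_ite (subst N d hd), map_zero, subst_polyGerm hd]
            refine congrArg (fun z => if j = pq.1 then z else 0) (congrArg polyGerm ?_)
            simp [MvPolynomial.algebraMap_eq]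
          exact congrArg Subtype.val hO
        dsimp only
        rw [heq]
        exact SetLike.mem_coe.mpr (Submodule.mem_sup_right
          (Submodule.subset_span (Or.inr ⟨pq, rfl⟩)))
  -- the key membership for monomial multiples of standard basis matrices
  have hTG : ∀ (i : Fin N) (a' : Fin m) (b' : Fin n),
      (polyGerm (X i : MvPolynomial (Fin N) ℂ) ^ (r * d)) •
          Matrix.single a' b' (1 : Ogerm N)
        ∈ GTangent fun i j => ∑ lam : Fin N, MvPolynomial.C (C lam i j) * X lam ^ d := by
    intro i a' b'
    have h5 : (polyGerm (X i : MvPolynomial (Fin N) ℂ) ^ r) •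
        Matrix.single a' b' (1 : Ogerm N)
        ∈ (mIdeal N) ^ r • (⊤ : Submodule (Ogerm N) (Matrix (Fin m) (Fin n) (Ogerm N))) :=
      Submodule.smul_mem_smul (Ideal.pow_mem_pow (X_mem_mIdeal i) r) trivial
    have h6 := hL h5
    have h7 := map_subst_span hd _ h6
    have h8 : ((polyGerm (X i : MvPolynomial (Fin N) ℂ) ^ r) •
        Matrix.single a' b' (1 : Ogerm N)).map (subst N d hd)
        = (polyGerm (X i : MvPolynomial (Fin N) ℂ) ^ (r * d)) •
            Matrix.single a' b' (1 : Ogerm N) := by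
      rw [map_subst_smul]
      congr 1
      · rw [map_pow, subst_polyGerm hd]
        have haev : (aeval fun i => (X i : MvPolynomial (Fin N) ℂ) ^ d)
            (X i : MvPolynomial (Fin N) ℂ) = X i ^ d := by simp
        rw [haev, polyGerm_pow', ← pow_mul, mul_comm d r]
      · ext i' j'
        rw [Matrix.map_apply]
        have hO : subst N d hd (Matrix.single a' b' (1 : Ogerm N) i' j')
            = Matrix.single a' b' (1 : Ogerm N) i' j' := by
          simp [Matrix.single, apply_ite (subst N d hd)]
        exact congrArg Subtype.val hO
    rw [h8] at h7
    exact (Submodule.span_le.mpr himg) h7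
  -- now the main inclusion
  intro z hz
  refine Submodule.smul_induction_on hz ?_ fun x y hx hy => Submodule.add_mem _ hx hy
  intro a ha v _
  have ham : a ∈ Ideal.span (Set.range fun i =>
      polyGerm (X i : MvPolynomial (Fin N) ℂ) ^ (r * d)) := mIdeal_pow_le (r * d) ha
  have ham' : a ∈ Submodule.span (Ogerm N)
      (Set.range fun i => polyGerm (X i : MvPolynomial (Fin N) ℂ) ^ (r * d)) := ham
  rw [Submodule.mem_span_range_iff_exists_fun] at ham'
  obtain ⟨c, hc⟩ := ham'
  rw [← hc, Finset.sum_smul]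
  refine Submodule.sum_mem _ fun i _ => ?_
  rw [smul_eq_mul, mul_smul]
  refine Submodule.smul_mem _ _ ?_
  have hv' : (polyGerm (X i : MvPolynomial (Fin N) ℂ) ^ (r * d)) • v
      = ∑ a' : Fin m, ∑ b' : Fin n,
          (polyGerm (X i : MvPolynomial (Fin N) ℂ) ^ (r * d)) •
            Matrix.single a' b' (v a' b') := by
    conv_lhs => rw [Matrix.matrix_eq_sum_single v]
    simp [Finset.smul_sum]
  rw [hv']
  refine Submodule.sum_mem _ fun a' _ => ?_
  refine Submodule.sum_mem _ fun b' _ => ?_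
  have hstd : Matrix.single a' b' (v a' b')
      = v a' b' • Matrix.single a' b' (1 : Ogerm N) := by
    rw [Matrix.smul_single, smul_eq_mul, mul_one]
  rw [hstd, smul_comm]
  exact Submodule.smul_mem _ _ (hTG i a' b')


end
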